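/- arXiv:1108.6189 — 3 statements merged into one kernel-verified Lean document; each statement's English description precedes it below -/
import Mathlib

section
/- In an abstract rank one group X with abelian unipotent subgroups A and B, for each nontrivial a in A the element b in B satisfying A^b = B^a is uniquely determined. -/
/-- Conjugate `S ^ g = g⁻¹ S g` of a subgroup. -/
def conjSub {X : Type*} [Group X] (S : Subgroup X) (g : X) : Subgroup X :=
  S.map ((MulAut.conj g⁻¹).toMonoidHom)

lemma mem_conjSub {X : Type*} [Group X] {S : Subgroup X} {g x : X} :
    x ∈ conjSub S g ↔ g * x * g⁻¹ ∈ S := by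
  constructor
  · rintro ⟨s, hs, rfl⟩
    simpa [mul_assoc] using hs
  · intro hx
    refine ⟨g * x * g⁻¹, hx, ?_⟩
    show g⁻¹ * (g * x * g⁻¹) * g⁻¹⁻¹ = x
    group

lemma conjSub_conjSub {X : Type*} [Group X] (S : Subgroup X) (g h : X) :
    conjSub (conjSub S g) h = conjSub S (g * h) := by
  ext x
  simp only [mem_conjSub]
  have e : g * (h * x * h⁻¹) * g⁻¹ = (g * h) * x * (g * h)⁻¹ := by group
  rw [e]

lemma conjSub_one {X : Type*} [Group X] (S : Subgroup X) :
    conjSub S 1 = S := by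
  ext x; simp [mem_conjSub]

lemma conjSub_self {X : Type*} [Group X] {S : Subgroup X} {g : X} (hg : g ∈ S) :
    conjSub S g = S := by
  ext x
  rw [mem_conjSub]
  constructor
  · intro hx
    have := S.mul_mem (S.mul_mem (S.inv_mem hg) hx) hg
    simpa [mul_assoc] using this
  · intro hx
    exact S.mul_mem (S.mul_mem hg hx) (S.inv_mem hg)

theorem stmt0
    {X : Type*} [Group X] (A B : Subgroup X) (hAB : A ≠ B)
    (hAcomm : IsMulCommutative A) (hBcomm : IsMulCommutative B)
    (hgen : A ⊔ B = ⊤)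
    (hab : ∀ a ∈ A, a ≠ 1 → ∃ b ∈ B, b ≠ 1 ∧ conjSub A b = conjSub B a)
    (hba : ∀ b ∈ B, b ≠ 1 → ∃ a ∈ A, a ≠ 1 ∧ conjSub B a = conjSub A b)
    (a : X) (ha : a ∈ A) (ha1 : a ≠ 1)
    (b b' : X) (hb : b ∈ B) (hb1 : b ≠ 1) (hb' : b' ∈ B) (hb'1 : b' ≠ 1)
    (h : conjSub A b = conjSub B a) (h' : conjSub A b' = conjSub B a) :
    b = b' := by
  have heq : conjSub A b = conjSub A b' := h.trans h'.symm
  have hc : conjSub A (b * b'⁻¹) = A := by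
    have := congrArg (fun S => conjSub S b'⁻¹) heq
    simpa [conjSub_conjSub, conjSub_one] using this
  by_contra hne
  have hc1 : b * b'⁻¹ ≠ 1 := fun hh => hne (by
    have := mul_inv_eq_one.mp hh
    exact this)
  obtain ⟨a', ha', ha'1, hBa'⟩ := hba (b * b'⁻¹) (B.mul_mem hb (B.inv_mem hb')) hc1
  rw [hc] at hBa'
  -- conjSub B a' = A ; apply conjSub by a'⁻¹
  have : B = conjSub A a'⁻¹ := by
    have := congrArg (fun S => conjSub S a'⁻¹) hBa'
    simpa [conjSub_conjSub, conjSub_one] using this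
  rw [conjSub_self (A.inv_mem ha')] at this
  exact hAB this.symm
end

section
/- In an abstract rank one group X with abelian unipotent subgroups A and B, the normalizer-in-A of B is trivial: N_A(B) = 1. -/
lemma conjSub_conjSub_inv {X : Type*} [Group X] (S : Subgroup X) (g : X) :
    conjSub (conjSub S g) g⁻¹ = S := by
  ext x
  rw [mem_conjSub, mem_conjSub]
  constructor
  · intro hx; simpa [mul_assoc] using hx
  · intro hx; simpa [mul_assoc] using hx

theorem stmt5
    {X : Type*} [Group X] (A B : Subgroup X) (hAB : A ≠ B)
    (hAcomm : IsMulCommutative A) (hBcomm : IsMulCommutative B)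
    (hgen : A ⊔ B = ⊤)
    (hab : ∀ a ∈ A, a ≠ 1 → ∃ b ∈ B, b ≠ 1 ∧ conjSub A b = conjSub B a)
    (hba : ∀ b ∈ B, b ≠ 1 → ∃ a ∈ A, a ≠ 1 ∧ conjSub B a = conjSub A b)
    (a : X) (ha : a ∈ A) (h : conjSub B a = B) :
    a = 1 := by
  by_contra hne
  obtain ⟨b, hbB, hb1, hconj⟩ := hab a ha hne
  rw [h] at hconj
  -- hconj : conjSub A b = B
  apply hAB
  calc A = conjSub (conjSub A b) b⁻¹ := (conjSub_conjSub_inv A b).symm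
    _ = conjSub B b⁻¹ := by rw [hconj]
    _ = B := conjSub_self (B.inv_mem hbB)
end

section
/- Let X be a special abstract rank one group with abelian unipotent subgroups A and B, and H = N_X(A) ∩ N_X(B). If |A| ≥ 4, then A = [A,H]. -/
open scoped commutatorElement

namespace Rk1Aux

variable {X : Type*} [Group X]

lemma mem_conjSub {S : Subgroup X} {g x : X} : x ∈ conjSub S g ↔ g * x * g⁻¹ ∈ S := by
  unfold conjSub
  simp only [Subgroup.mem_map, MulEquiv.coe_toMonoidHom, MulAut.conj_apply, inv_inv]
  constructor
  · rintro ⟨s, hs, rfl⟩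
    have : g * (g⁻¹ * s * g) * g⁻¹ = s := by group
    rw [this]; exact hs
  · intro h
    exact ⟨g * x * g⁻¹, h, by group⟩

lemma conjSub_mul {S : Subgroup X} {g h : X} :
    conjSub S (g * h) = conjSub (conjSub S g) h := by
  ext x
  simp only [mem_conjSub]
  have e : g * (h * x * h⁻¹) * g⁻¹ = (g * h) * x * (g * h)⁻¹ := by group
  rw [e]

lemma conjSub_one {S : Subgroup X} : conjSub S 1 = S := by
  ext x
  simp only [mem_conjSub, one_mul, inv_one, mul_one]

lemma conjSub_of_mem {S : Subgroup X} {s : X} (hs : s ∈ S) : conjSub S s = S := by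
  ext x
  simp only [mem_conjSub]
  constructor
  · intro h
    have : x = s⁻¹ * (s * x * s⁻¹) * s := by group
    rw [this]
    exact S.mul_mem (S.mul_mem (S.inv_mem hs) h) hs
  · intro h
    exact S.mul_mem (S.mul_mem hs h) (S.inv_mem hs)

lemma mem_normalizer_iff_conjSub {S : Subgroup X} {g : X} :
    g ∈ Subgroup.normalizer (S : Set X) ↔ conjSub S g = S := by
  rw [Subgroup.mem_normalizer_iff]
  constructor
  · intro h
    ext x
    rw [mem_conjSub]
    exact (h x).symm
  · intro h x
    conv_lhs => rw [← h]
    rw [mem_conjSub]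


lemma conjSub_collapse {S : Subgroup X} {g : X} : conjSub (conjSub S g) g⁻¹ = S := by
  rw [← conjSub_mul, mul_inv_cancel, conjSub_one]

lemma conjSub_collapse' {S : Subgroup X} {g : X} : conjSub (conjSub S g⁻¹) g = S := by
  rw [← conjSub_mul, inv_mul_cancel, conjSub_one]

lemma abstract_braid_conj {d z : X} (h : d * z⁻¹ * d * z * d⁻¹ = z⁻¹) :
    (d⁻¹ * z * d⁻¹)⁻¹ * z * (d⁻¹ * z * d⁻¹) = d⁻¹ := by
  have e : (d⁻¹ * z * d⁻¹)⁻¹ * z * (d⁻¹ * z * d⁻¹) = (d * z⁻¹ * d * z * d⁻¹) * (z * d⁻¹) := by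
    group
  rw [e, h]; group

lemma abstract_step {m n d z : X} (hzm : m⁻¹ * z * m = d⁻¹) :
    n⁻¹ * z * n = d⁻¹ * ⁅d, (m⁻¹ * n)⁻¹⁆ := by
  calc n⁻¹ * z * n = (m⁻¹ * n)⁻¹ * (m⁻¹ * z * m) * (m⁻¹ * n) := by group
    _ = (m⁻¹ * n)⁻¹ * d⁻¹ * (m⁻¹ * n) := by rw [hzm]
    _ = d⁻¹ * ⁅d, (m⁻¹ * n)⁻¹⁆ := by rw [commutatorElement_def]; group

/-- Bundled context of a special rank one group with abelian unipotent subgroups. -/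
structure Ctx (X : Type*) [Group X] where
  A : Subgroup X
  B : Subgroup X
  hAB : A ≠ B
  hAcomm : IsMulCommutative A
  bf : X → X
  hba : ∀ b ∈ B, b ≠ 1 → ∃ a ∈ A, a ≠ 1 ∧ conjSub B a = conjSub A b
  hbf : ∀ a ∈ A, a ≠ 1 → bf a ∈ B ∧ bf a ≠ 1 ∧ conjSub A (bf a) = conjSub B a
  hbfu : ∀ a ∈ A, a ≠ 1 → ∀ b ∈ B, b ≠ 1 → conjSub A b = conjSub B a → b = bf a
  hspecial : ∀ a ∈ A, a ≠ 1 → bf a⁻¹ = (bf a)⁻¹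

namespace Ctx

variable {X : Type*} [Group X] (c : Ctx X)

/-- The intersection of the two normalizers. -/
def Hgrp : Subgroup X := Subgroup.normalizer (c.A : Set X) ⊓ Subgroup.normalizer (c.B : Set X)

/-- The commutator subgroup `[A, H]`. -/
def Mgrp : Subgroup X := ⁅c.A, c.Hgrp⁆

/-- No nontrivial element of `A` normalizes `B`. -/
lemma bnorm {a : X} (ha : a ∈ c.A) (h1 : a ≠ 1) : conjSub c.B a ≠ c.B := by
  intro h
  obtain ⟨hb, hb1, heq⟩ := c.hbf a ha h1
  apply c.hAB
  have h2 : conjSub c.A (bf c a) = c.B := heq.trans h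
  have h3 : conjSub (conjSub c.A (c.bf a)) (c.bf a)⁻¹ = conjSub c.B (c.bf a)⁻¹ := by rw [h2]
  rw [← conjSub_mul, mul_inv_cancel, conjSub_one] at h3
  rw [h3, conjSub_of_mem (c.B.inv_mem hb)]

/-- No nontrivial element of `B` normalizes `A`. -/
lemma anorm {b : X} (hb : b ∈ c.B) (h1 : b ≠ 1) : conjSub c.A b ≠ c.A := by
  intro h
  obtain ⟨a, ha, ha1, heq⟩ := c.hba b hb h1
  apply c.hAB
  have h2 : conjSub c.B a = c.A := heq.trans h
  have h3 : conjSub (conjSub c.B a) a⁻¹ = conjSub c.A a⁻¹ := by rw [h2]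
  rw [← conjSub_mul, mul_inv_cancel, conjSub_one] at h3
  rw [conjSub_of_mem (c.A.inv_mem ha)] at h3
  exact h3.symm

/-- Elements of `A` are determined by the conjugate of `B`. -/
lemma uniqA {a₁ a₂ : X} (h₁ : a₁ ∈ c.A) (h₂ : a₂ ∈ c.A)
    (h : conjSub c.B a₁ = conjSub c.B a₂) : a₁ = a₂ := by
  by_contra hne
  have hd1 : a₁ * a₂⁻¹ ≠ 1 := fun h0 => hne (mul_inv_eq_one.mp h0)
  have : conjSub c.B (a₁ * a₂⁻¹) = c.B := by
    rw [conjSub_mul, h, ← conjSub_mul, mul_inv_cancel, conjSub_one]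
  exact c.bnorm (c.A.mul_mem h₁ (c.A.inv_mem h₂)) hd1 this

/-- Elements of `B` are determined by the conjugate of `A`. -/
lemma uniqB {b₁ b₂ : X} (h₁ : b₁ ∈ c.B) (h₂ : b₂ ∈ c.B)
    (h : conjSub c.A b₁ = conjSub c.A b₂) : b₁ = b₂ := by
  by_contra hne
  have hd1 : b₁ * b₂⁻¹ ≠ 1 := fun h0 => hne (mul_inv_eq_one.mp h0)
  have : conjSub c.A (b₁ * b₂⁻¹) = c.A := by
    rw [conjSub_mul, h, ← conjSub_mul, mul_inv_cancel, conjSub_one]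
  exact c.anorm (c.B.mul_mem h₁ (c.B.inv_mem h₂)) hd1 this

open Classical in
/-- Choice of the reverse bijection. -/
noncomputable def af (z : X) : X :=
  if h : z ∈ c.B ∧ z ≠ 1 then (c.hba z h.1 h.2).choose else 1

lemma af_spec {z : X} (hz : z ∈ c.B) (h1 : z ≠ 1) :
    c.af z ∈ c.A ∧ c.af z ≠ 1 ∧ conjSub c.B (c.af z) = conjSub c.A z := by
  have h : z ∈ c.B ∧ z ≠ 1 := ⟨hz, h1⟩
  rw [af]
  rw [dif_pos h]
  obtain ⟨ha, h2, h3⟩ := (c.hba z h.1 h.2).choose_spec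
  exact ⟨ha, h2, h3⟩

lemma af_bf {a : X} (ha : a ∈ c.A) (h1 : a ≠ 1) : c.af (c.bf a) = a := by
  obtain ⟨hb, hb1, heq⟩ := c.hbf a ha h1
  obtain ⟨h2, h3, h4⟩ := c.af_spec hb hb1
  exact c.uniqA h2 ha (h4.trans heq)

lemma bf_af {z : X} (hz : z ∈ c.B) (h1 : z ≠ 1) : c.bf (c.af z) = z := by
  obtain ⟨h2, h3, h4⟩ := c.af_spec hz h1
  exact (c.hbfu (c.af z) h2 h3 z hz h1 h4.symm).symm

lemma bf_mem {a : X} (ha : a ∈ c.A) (h1 : a ≠ 1) : c.bf a ∈ c.B := (c.hbf a ha h1).1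
lemma bf_ne {a : X} (ha : a ∈ c.A) (h1 : a ≠ 1) : c.bf a ≠ 1 := (c.hbf a ha h1).2.1
lemma af_mem {z : X} (hz : z ∈ c.B) (h1 : z ≠ 1) : c.af z ∈ c.A := (c.af_spec hz h1).1
lemma af_ne {z : X} (hz : z ∈ c.B) (h1 : z ≠ 1) : c.af z ≠ 1 := (c.af_spec hz h1).2.1

lemma bf_inj {a₁ a₂ : X} (h₁ : a₁ ∈ c.A) (h₁1 : a₁ ≠ 1) (h₂ : a₂ ∈ c.A) (h₂1 : a₂ ≠ 1)
    (h : c.bf a₁ = c.bf a₂) : a₁ = a₂ := by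
  have := congrArg c.af h
  rwa [c.af_bf h₁ h₁1, c.af_bf h₂ h₂1] at this

lemma af_inv {z : X} (hz : z ∈ c.B) (h1 : z ≠ 1) : c.af z⁻¹ = (c.af z)⁻¹ := by
  have hA := c.af_mem hz h1
  have hA1 := c.af_ne hz h1
  have hbfinv : c.bf (c.af z)⁻¹ = z⁻¹ := by
    rw [c.hspecial (c.af z) hA hA1, c.bf_af hz h1]
  -- conjugation facts
  have h2 : conjSub c.A z⁻¹ = conjSub c.B (c.af z)⁻¹ := by
    have := (c.hbf (c.af z)⁻¹ (c.A.inv_mem hA) (by simpa using hA1)).2.2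
    rw [hbfinv] at this
    exact this
  have h3 := (c.af_spec (c.B.inv_mem hz) (by simpa using h1)).2.2
  exact c.uniqA (c.af_mem (c.B.inv_mem hz) (by simpa using h1)) (c.A.inv_mem hA)
    (h3.trans h2)

/-- `A^{bf a} = B^a`. -/
lemma cAbf {a : X} (ha : a ∈ c.A) (h1 : a ≠ 1) :
    conjSub c.A (c.bf a) = conjSub c.B a := (c.hbf a ha h1).2.2

/-- `A^{(bf a)⁻¹} = B^{a⁻¹}`. -/
lemma cAbf_inv {a : X} (ha : a ∈ c.A) (h1 : a ≠ 1) :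
    conjSub c.A (c.bf a)⁻¹ = conjSub c.B a⁻¹ := by
  rw [← c.hspecial a ha h1]
  exact c.cAbf (c.A.inv_mem ha) (by simpa using h1)

/-- `B^{af z} = A^z`. -/
lemma cBaf {z : X} (hz : z ∈ c.B) (h1 : z ≠ 1) :
    conjSub c.B (c.af z) = conjSub c.A z := (c.af_spec hz h1).2.2

/-- `B^{(af z)⁻¹} = A^{z⁻¹}`. -/
lemma cBaf_inv {z : X} (hz : z ∈ c.B) (h1 : z ≠ 1) :
    conjSub c.B (c.af z)⁻¹ = conjSub c.A z⁻¹ := by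
  rw [← c.af_inv hz h1]
  exact c.cBaf (c.B.inv_mem hz) (by simpa using h1)

lemma M_le_A : c.Mgrp ≤ c.A := by
  rw [Mgrp, Subgroup.commutator_le]
  intro a ha h hh
  have hhA : h ∈ Subgroup.normalizer (c.A : Set X) := (Subgroup.mem_inf.mp hh).1
  rw [Subgroup.mem_normalizer_iff] at hhA
  have : h * a⁻¹ * h⁻¹ ∈ c.A := (hhA a⁻¹).mp (c.A.inv_mem ha)
  have e : ⁅a, h⁆ = a * (h * a⁻¹ * h⁻¹) := by rw [commutatorElement_def]; group
  rw [e]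
  exact c.A.mul_mem ha this

lemma AinterH {a : X} (ha : a ∈ c.A) (hH : a ∈ c.Hgrp) : a = 1 := by
  by_contra h1
  have h2 := (Subgroup.mem_inf.mp hH).2
  rw [mem_normalizer_iff_conjSub] at h2
  exact c.bnorm ha h1 h2

lemma acomm {a b : X} (ha : a ∈ c.A) (hb : b ∈ c.A) : a * b = b * a := by
  haveI := c.hAcomm
  exact Subgroup.mul_comm_of_mem_isMulCommutative (H := c.A) ha hb

/-- The swap element `m_z := (af z)⁻¹ z (af z)⁻¹` maps `A` to `B`. -/
lemma m_swapA {z : X} (hz : z ∈ c.B) (h1 : z ≠ 1) :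
    conjSub c.A ((c.af z)⁻¹ * z * (c.af z)⁻¹) = c.B := by
  calc conjSub c.A ((c.af z)⁻¹ * z * (c.af z)⁻¹)
      = conjSub (conjSub (conjSub c.A (c.af z)⁻¹) z) (c.af z)⁻¹ := by
        rw [conjSub_mul (g := (c.af z)⁻¹ * z), conjSub_mul (g := (c.af z)⁻¹)]
    _ = conjSub (conjSub c.A z) (c.af z)⁻¹ := by
        rw [conjSub_of_mem (c.A.inv_mem (c.af_mem hz h1))]
    _ = conjSub (conjSub c.B (c.af z)) (c.af z)⁻¹ := by rw [← c.cBaf hz h1]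
    _ = c.B := conjSub_collapse

/-- The swap element `m_z` maps `B` to `A`. -/
lemma m_swapB {z : X} (hz : z ∈ c.B) (h1 : z ≠ 1) :
    conjSub c.B ((c.af z)⁻¹ * z * (c.af z)⁻¹) = c.A := by
  calc conjSub c.B ((c.af z)⁻¹ * z * (c.af z)⁻¹)
      = conjSub (conjSub (conjSub c.B (c.af z)⁻¹) z) (c.af z)⁻¹ := by
        rw [conjSub_mul (g := (c.af z)⁻¹ * z), conjSub_mul (g := (c.af z)⁻¹)]
    _ = conjSub (conjSub (conjSub c.A z⁻¹) z) (c.af z)⁻¹ := by rw [c.cBaf_inv hz h1]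
    _ = conjSub c.A (c.af z)⁻¹ := by rw [conjSub_collapse']
    _ = c.A := conjSub_of_mem (c.A.inv_mem (c.af_mem hz h1))

/-- The swap element `n_y := (bf y)⁻¹ y (bf y)⁻¹` maps `A` to `B`. -/
lemma n_swapA {y : X} (hy : y ∈ c.A) (h1 : y ≠ 1) :
    conjSub c.A ((c.bf y)⁻¹ * y * (c.bf y)⁻¹) = c.B := by
  calc conjSub c.A ((c.bf y)⁻¹ * y * (c.bf y)⁻¹)
      = conjSub (conjSub (conjSub c.A (c.bf y)⁻¹) y) (c.bf y)⁻¹ := by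
        rw [conjSub_mul (g := (c.bf y)⁻¹ * y), conjSub_mul (g := (c.bf y)⁻¹)]
    _ = conjSub (conjSub (conjSub c.B y⁻¹) y) (c.bf y)⁻¹ := by rw [c.cAbf_inv hy h1]
    _ = conjSub c.B (c.bf y)⁻¹ := by rw [conjSub_collapse']
    _ = c.B := conjSub_of_mem (c.B.inv_mem (c.bf_mem hy h1))

/-- The swap element `n_y` maps `B` to `A`. -/
lemma n_swapB {y : X} (hy : y ∈ c.A) (h1 : y ≠ 1) :
    conjSub c.B ((c.bf y)⁻¹ * y * (c.bf y)⁻¹) = c.A := by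
  calc conjSub c.B ((c.bf y)⁻¹ * y * (c.bf y)⁻¹)
      = conjSub (conjSub (conjSub c.B (c.bf y)⁻¹) y) (c.bf y)⁻¹ := by
        rw [conjSub_mul (g := (c.bf y)⁻¹ * y), conjSub_mul (g := (c.bf y)⁻¹)]
    _ = conjSub (conjSub c.B y) (c.bf y)⁻¹ := by
        rw [conjSub_of_mem (c.B.inv_mem (c.bf_mem hy h1))]
    _ = conjSub (conjSub c.A (c.bf y)) (c.bf y)⁻¹ := by rw [c.cAbf hy h1]
    _ = c.A := conjSub_collapse

lemma swap_inv {g : X} (hA : conjSub c.A g = c.B) (hB : conjSub c.B g = c.A) :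
    conjSub c.A g⁻¹ = c.B ∧ conjSub c.B g⁻¹ = c.A := by
  constructor
  · rw [← hB, ← conjSub_mul, mul_inv_cancel, conjSub_one]
  · rw [← hA, ← conjSub_mul, mul_inv_cancel, conjSub_one]

lemma swap_mul_mem {g₁ g₂ : X} (h1A : conjSub c.A g₁ = c.B) (h1B : conjSub c.B g₁ = c.A)
    (h2A : conjSub c.A g₂ = c.B) (h2B : conjSub c.B g₂ = c.A) : g₁ * g₂ ∈ c.Hgrp := by
  rw [Hgrp, Subgroup.mem_inf]
  constructor <;> rw [mem_normalizer_iff_conjSub]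
  · rw [conjSub_mul, h1A, h2B]
  · rw [conjSub_mul, h1B, h2A]

/-- Mirror braid identity: `(af z)^{z (af z)⁻¹} = z⁻¹`. -/
lemma mirror_braid {z : X} (hz : z ∈ c.B) (h1 : z ≠ 1) :
    c.af z * z⁻¹ * c.af z * z * (c.af z)⁻¹ = z⁻¹ := by
  have hdA : c.af z ∈ c.A := c.af_mem hz h1
  -- membership in B
  have hw : z * (z⁻¹ * c.af z * z) * z⁻¹ ∈ c.A := by
    have e : z * (z⁻¹ * c.af z * z) * z⁻¹ = c.af z := by group
    rw [e]; exact hdA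
  have hwmem : z⁻¹ * c.af z * z ∈ conjSub c.A z := mem_conjSub.mpr hw
  rw [← c.cBaf hz h1] at hwmem
  have huB : c.af z * z⁻¹ * c.af z * z * (c.af z)⁻¹ ∈ c.B := by
    have e : c.af z * z⁻¹ * c.af z * z * (c.af z)⁻¹
        = c.af z * (z⁻¹ * c.af z * z) * (c.af z)⁻¹ := by group
    rw [e]
    exact mem_conjSub.mp hwmem
  -- conjugation computation
  have hchain : conjSub c.A (c.af z * z⁻¹ * c.af z * z * (c.af z)⁻¹) = conjSub c.A z⁻¹ := by
    calc conjSub c.A (c.af z * z⁻¹ * c.af z * z * (c.af z)⁻¹)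
        = conjSub (conjSub (conjSub (conjSub (conjSub c.A (c.af z)) z⁻¹) (c.af z)) z)
            (c.af z)⁻¹ := by
          rw [conjSub_mul (g := c.af z * z⁻¹ * c.af z * z),
            conjSub_mul (g := c.af z * z⁻¹ * c.af z),
            conjSub_mul (g := c.af z * z⁻¹), conjSub_mul (g := c.af z)]
      _ = conjSub (conjSub (conjSub (conjSub c.A z⁻¹) (c.af z)) z) (c.af z)⁻¹ := by
          rw [conjSub_of_mem hdA]
      _ = conjSub (conjSub (conjSub (conjSub c.B (c.af z)⁻¹) (c.af z)) z) (c.af z)⁻¹ := by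
          rw [← c.cBaf_inv hz h1]
      _ = conjSub (conjSub c.B z) (c.af z)⁻¹ := by rw [conjSub_collapse']
      _ = conjSub c.B (c.af z)⁻¹ := by rw [conjSub_of_mem hz]
      _ = conjSub c.A z⁻¹ := c.cBaf_inv hz h1
  exact c.uniqB huB (c.B.inv_mem hz) hchain

/-- For all `z ∈ B✶` and `y ∈ A✶`, conjugation by `n_y` sends `z` to `(af z)⁻¹` mod `M`. -/
lemma conj_n_af {z y : X} (hz : z ∈ c.B) (hz1 : z ≠ 1) (hy : y ∈ c.A) (hy1 : y ≠ 1) :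
    ∃ μ ∈ c.Mgrp,
      ((c.bf y)⁻¹ * y * (c.bf y)⁻¹)⁻¹ * z * ((c.bf y)⁻¹ * y * (c.bf y)⁻¹)
        = (c.af z)⁻¹ * μ := by
  obtain ⟨miA, miB⟩ := c.swap_inv (c.m_swapA hz hz1) (c.m_swapB hz hz1)
  have hg' : ((c.af z)⁻¹ * z * (c.af z)⁻¹)⁻¹ * ((c.bf y)⁻¹ * y * (c.bf y)⁻¹) ∈ c.Hgrp :=
    c.swap_mul_mem miA miB (c.n_swapA hy hy1) (c.n_swapB hy hy1)
  refine ⟨⁅c.af z, (((c.af z)⁻¹ * z * (c.af z)⁻¹)⁻¹ * ((c.bf y)⁻¹ * y * (c.bf y)⁻¹))⁻¹⁆,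
    ?_, ?_⟩
  · exact Subgroup.commutator_mem_commutator (c.af_mem hz hz1) (c.Hgrp.inv_mem hg')
  · exact abstract_step (abstract_braid_conj (c.mirror_braid hz hz1))

/-- Modulo `M = [A,H]`, the map `af` is multiplicative. -/
lemma af_mul {z₁ z₂ : X} (h₁ : z₁ ∈ c.B) (h₁1 : z₁ ≠ 1) (h₂ : z₂ ∈ c.B) (h₂1 : z₂ ≠ 1)
    (h12 : z₁ * z₂ ≠ 1) {e : X} (he : e ∈ c.A) (he1 : e ≠ 1) :
    c.af z₁ * c.af z₂ * (c.af (z₁ * z₂))⁻¹ ∈ c.Mgrp := by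
  obtain ⟨μ₁, hμ₁, e₁⟩ := c.conj_n_af h₁ h₁1 he he1
  obtain ⟨μ₂, hμ₂, e₂⟩ := c.conj_n_af h₂ h₂1 he he1
  obtain ⟨μ₀, hμ₀, e₀⟩ := c.conj_n_af (c.B.mul_mem h₁ h₂) h12 he he1
  have emul : ((c.bf e)⁻¹ * e * (c.bf e)⁻¹)⁻¹ * (z₁ * z₂) * ((c.bf e)⁻¹ * e * (c.bf e)⁻¹)
      = (((c.bf e)⁻¹ * e * (c.bf e)⁻¹)⁻¹ * z₁ * ((c.bf e)⁻¹ * e * (c.bf e)⁻¹)) *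
        (((c.bf e)⁻¹ * e * (c.bf e)⁻¹)⁻¹ * z₂ * ((c.bf e)⁻¹ * e * (c.bf e)⁻¹)) := by
    group
  rw [e₀, e₁, e₂] at emul
  -- emul : (af (z₁z₂))⁻¹ * μ₀ = ((af z₁)⁻¹ * μ₁) * ((af z₂)⁻¹ * μ₂)
  have ha₁ : c.af z₁ ∈ c.A := c.af_mem h₁ h₁1
  have ha₂ : c.af z₂ ∈ c.A := c.af_mem h₂ h₂1
  have hinv : (c.af (z₁ * z₂))⁻¹
      = (c.af z₁)⁻¹ * μ₁ * ((c.af z₂)⁻¹ * μ₂) * μ₀⁻¹ := by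
    calc (c.af (z₁ * z₂))⁻¹ = ((c.af (z₁ * z₂))⁻¹ * μ₀) * μ₀⁻¹ := by group
      _ = ((c.af z₁)⁻¹ * μ₁) * ((c.af z₂)⁻¹ * μ₂) * μ₀⁻¹ := by rw [emul]
      _ = (c.af z₁)⁻¹ * μ₁ * ((c.af z₂)⁻¹ * μ₂) * μ₀⁻¹ := by group
  have c1 : c.af z₂ * (c.af z₁)⁻¹ = (c.af z₁)⁻¹ * c.af z₂ :=
    c.acomm ha₂ (c.A.inv_mem ha₁)
  have c2 : c.af z₂ * μ₁ = μ₁ * c.af z₂ := c.acomm ha₂ (c.M_le_A hμ₁)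
  have final : c.af z₁ * c.af z₂ * (c.af (z₁ * z₂))⁻¹ = μ₁ * μ₂ * μ₀⁻¹ := by
    calc c.af z₁ * c.af z₂ * (c.af (z₁ * z₂))⁻¹
        = c.af z₁ * (c.af z₂ * (c.af z₁)⁻¹) * μ₁ * (c.af z₂)⁻¹ * μ₂ * μ₀⁻¹ := by
          rw [hinv]; group
      _ = c.af z₁ * ((c.af z₁)⁻¹ * c.af z₂) * μ₁ * (c.af z₂)⁻¹ * μ₂ * μ₀⁻¹ := by rw [c1]
      _ = (c.af z₂ * μ₁) * (c.af z₂)⁻¹ * μ₂ * μ₀⁻¹ := by group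
      _ = (μ₁ * c.af z₂) * (c.af z₂)⁻¹ * μ₂ * μ₀⁻¹ := by rw [c2]
      _ = μ₁ * μ₂ * μ₀⁻¹ := by group
  rw [final]
  exact mul_mem (mul_mem hμ₁ hμ₂) (inv_mem hμ₀)

/-- The key Bruhat-type decomposition:
`(bf (xy))⁻¹ · x · bf y = h · af(bf x · bf y)` with `h ∈ H`. -/
lemma key {x y : X} (hx : x ∈ c.A) (hx1 : x ≠ 1) (hy : y ∈ c.A) (hy1 : y ≠ 1)
    (hxy : x * y ≠ 1) :
    ∃ h ∈ c.Hgrp, (c.bf (x * y))⁻¹ * x * c.bf y = h * c.af (c.bf x * c.bf y) := by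
  have hxyA : x * y ∈ c.A := c.A.mul_mem hx hy
  have hz : c.bf x * c.bf y ∈ c.B := c.B.mul_mem (c.bf_mem hx hx1) (c.bf_mem hy hy1)
  have hzne : c.bf x * c.bf y ≠ 1 := by
    intro h0
    have h1 : c.bf x = (c.bf y)⁻¹ := mul_eq_one_iff_eq_inv.mp h0
    rw [← c.hspecial y hy hy1] at h1
    have h2 : x = y⁻¹ := c.bf_inj hx hx1 (c.A.inv_mem hy) (inv_ne_one.mpr hy1) h1
    apply hxy
    rw [h2, inv_mul_cancel]
  have hA : conjSub c.A ((c.bf (x * y))⁻¹ * x * c.bf y) = c.A := by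
    calc conjSub c.A ((c.bf (x * y))⁻¹ * x * c.bf y)
        = conjSub (conjSub (conjSub c.A (c.bf (x * y))⁻¹) x) (c.bf y) := by
          rw [conjSub_mul (g := (c.bf (x * y))⁻¹ * x), conjSub_mul (g := (c.bf (x * y))⁻¹)]
      _ = conjSub (conjSub (conjSub c.B (x * y)⁻¹) x) (c.bf y) := by
          rw [c.cAbf_inv hxyA hxy]
      _ = conjSub (conjSub c.B ((x * y)⁻¹ * x)) (c.bf y) := by
          rw [← conjSub_mul (g := (x * y)⁻¹) (h := x)]
      _ = conjSub (conjSub c.B y⁻¹) (c.bf y) := by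
          rw [(show (x * y)⁻¹ * x = y⁻¹ by group)]
      _ = conjSub (conjSub c.A (c.bf y)⁻¹) (c.bf y) := by rw [← c.cAbf_inv hy hy1]
      _ = c.A := conjSub_collapse'
  have hB : conjSub c.B ((c.bf (x * y))⁻¹ * x * c.bf y)
      = conjSub c.B (c.af (c.bf x * c.bf y)) := by
    calc conjSub c.B ((c.bf (x * y))⁻¹ * x * c.bf y)
        = conjSub (conjSub (conjSub c.B (c.bf (x * y))⁻¹) x) (c.bf y) := by
          rw [conjSub_mul (g := (c.bf (x * y))⁻¹ * x), conjSub_mul (g := (c.bf (x * y))⁻¹)]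
      _ = conjSub (conjSub c.B x) (c.bf y) := by
          rw [conjSub_of_mem (c.B.inv_mem (c.bf_mem hxyA hxy))]
      _ = conjSub (conjSub c.A (c.bf x)) (c.bf y) := by rw [c.cAbf hx hx1]
      _ = conjSub c.A (c.bf x * c.bf y) := by rw [← conjSub_mul]
      _ = conjSub c.B (c.af (c.bf x * c.bf y)) := (c.cBaf hz hzne).symm
  refine ⟨((c.bf (x * y))⁻¹ * x * c.bf y) * (c.af (c.bf x * c.bf y))⁻¹, ?_, by group⟩
  rw [Hgrp, Subgroup.mem_inf]
  constructor <;> rw [mem_normalizer_iff_conjSub]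
  · rw [conjSub_mul, hA, conjSub_of_mem (c.A.inv_mem (c.af_mem hz hzne))]
  · rw [conjSub_mul, hB, conjSub_collapse]

/-- The crucial identity: `x·y·y ∈ [A,H]` for all nontrivial `x, y` with `xy ≠ 1`. -/
lemma crux {x y : X} (hx : x ∈ c.A) (hx1 : x ≠ 1) (hy : y ∈ c.A) (hy1 : y ≠ 1)
    (hxy : x * y ≠ 1) : x * y * y ∈ c.Mgrp := by
  have hxyA : x * y ∈ c.A := c.A.mul_mem hx hy
  obtain ⟨h₀, hh₀, e₀⟩ := c.key hx hx1 hy hy1 hxy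
  have hyy : x⁻¹ * (x * y) ≠ 1 := by
    rw [(show x⁻¹ * (x * y) = y by group)]; exact hy1
  obtain ⟨h₁, hh₁, e₁⟩ := c.key (c.A.inv_mem hx) (inv_ne_one.mpr hx1) hxyA hxy hyy
  rw [(show x⁻¹ * (x * y) = y by group), c.hspecial x hx hx1] at e₁
  -- abbreviations
  have hzne : c.bf x * c.bf y ≠ 1 := by
    intro h0
    have h1 : c.bf x = (c.bf y)⁻¹ := mul_eq_one_iff_eq_inv.mp h0
    rw [← c.hspecial y hy hy1] at h1
    have h2 : x = y⁻¹ := c.bf_inj hx hx1 (c.A.inv_mem hy) (inv_ne_one.mpr hy1) h1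
    apply hxy; rw [h2, inv_mul_cancel]
  have hz : c.bf x * c.bf y ∈ c.B := c.B.mul_mem (c.bf_mem hx hx1) (c.bf_mem hy hy1)
  have hz'ne : (c.bf x)⁻¹ * c.bf (x * y) ≠ 1 := by
    intro h0
    have h1 : c.bf x = c.bf (x * y) := inv_mul_eq_one.mp h0
    have h2 : x = x * y := c.bf_inj hx hx1 hxyA hxy h1
    exact hy1 (left_eq_mul.mp h2)
  have hz' : (c.bf x)⁻¹ * c.bf (x * y) ∈ c.B :=
    c.B.mul_mem (c.B.inv_mem (c.bf_mem hx hx1)) (c.bf_mem hxyA hxy)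
  set q := c.af (c.bf x * c.bf y) with hq
  set q' := c.af ((c.bf x)⁻¹ * c.bf (x * y)) with hq'
  have hqA : q ∈ c.A := c.af_mem hz hzne
  have hq'A : q' ∈ c.A := c.af_mem hz' hz'ne
  -- u := h₀⁻¹ q'⁻¹ h₀ ∈ A
  have hh₀n : h₀⁻¹ ∈ Subgroup.normalizer (c.A : Set X) :=
    (Subgroup.normalizer (c.A : Set X)).inv_mem (Subgroup.mem_inf.mp hh₀).1
  have huA : h₀⁻¹ * q'⁻¹ * h₀ ∈ c.A := by
    rw [Subgroup.mem_normalizer_iff] at hh₀n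
    have h3 := (hh₀n q'⁻¹).mp (c.A.inv_mem hq'A)
    simpa using h3
  -- W⁻¹ = h₁ * q'
  have eW : ((c.bf (x * y))⁻¹ * x * c.bf y)⁻¹ = h₁ * q' := by
    rw [← e₁]; group
  -- h₀⁻¹ = q * (h₁ * q')
  have rel : h₀⁻¹ = q * (h₁ * q') := by
    have hW : h₀ = ((c.bf (x * y))⁻¹ * x * c.bf y) * q⁻¹ := by rw [e₀]; group
    calc h₀⁻¹ = q * ((c.bf (x * y))⁻¹ * x * c.bf y)⁻¹ := by rw [hW]; group
      _ = q * (h₁ * q') := by rw [eW]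
  -- u = q
  have hu : h₀⁻¹ * q'⁻¹ * h₀ = q := by
    have h2 : q⁻¹ * (h₀⁻¹ * q'⁻¹ * h₀) = h₁ * h₀ := by rw [rel]; group
    have h3 : q⁻¹ * (h₀⁻¹ * q'⁻¹ * h₀) ∈ c.A := c.A.mul_mem (c.A.inv_mem hqA) huA
    have h4 : q⁻¹ * (h₀⁻¹ * q'⁻¹ * h₀) ∈ c.Hgrp := by
      rw [h2]; exact mul_mem hh₁ hh₀
    have h5 := c.AinterH h3 h4
    have h6 : h₀⁻¹ * q'⁻¹ * h₀ = q * (q⁻¹ * (h₀⁻¹ * q'⁻¹ * h₀)) := by group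
    rw [h6, h5, mul_one]
  -- q' * q ∈ M
  have hq'q : q' * q ∈ c.Mgrp := by
    have hcom : ⁅q', h₀⁻¹⁆ = q' * q := by
      rw [commutatorElement_def, inv_inv]
      calc q' * h₀⁻¹ * q'⁻¹ * h₀ = q' * (h₀⁻¹ * q'⁻¹ * h₀) := by group
        _ = q' * q := by rw [hu]
    rw [← hcom]
    exact Subgroup.commutator_mem_commutator hq'A (c.Hgrp.inv_mem hh₀)
  -- x*y*q⁻¹ ∈ M
  have m₁ : x * y * q⁻¹ ∈ c.Mgrp := by
    have h7 := c.af_mul (c.bf_mem hx hx1) (c.bf_ne hx hx1) (c.bf_mem hy hy1)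
      (c.bf_ne hy hy1) hzne hy hy1
    rw [← hq, c.af_bf hx hx1, c.af_bf hy hy1] at h7
    exact h7
  -- y*q'⁻¹ ∈ M
  have m₂ : y * q'⁻¹ ∈ c.Mgrp := by
    have h8 := c.af_mul (c.B.inv_mem (c.bf_mem hx hx1)) (inv_ne_one.mpr (c.bf_ne hx hx1))
      (c.bf_mem hxyA hxy) (c.bf_ne hxyA hxy) hz'ne hy hy1
    rw [← hq'] at h8
    have hafinv : c.af ((c.bf x)⁻¹) = x⁻¹ := by
      rw [← c.hspecial x hx hx1, c.af_bf (c.A.inv_mem hx) (inv_ne_one.mpr hx1)]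
    rw [hafinv, c.af_bf hxyA hxy] at h8
    rw [(show x⁻¹ * (x * y) = y by group)] at h8
    exact h8
  -- assemble
  have c1 : q' * q = q * q' := c.acomm hq'A hqA
  have c2 : q' * y = y * q' := c.acomm hq'A hy
  have final : (x * y * q⁻¹) * (q' * q) * (y * q'⁻¹) = x * y * y := by
    rw [c1]
    have step1 : (x * y * q⁻¹) * (q * q') * (y * q'⁻¹) = x * y * (q' * y) * q'⁻¹ := by group
    rw [step1, c2]; group
  rw [← final]
  exact mul_mem (mul_mem m₁ hq'q) m₂

end Ctx

lemma pick {X : Type*} [Group X] {A : Subgroup X} (hcard : 4 ≤ Cardinal.mk A)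
    (u v w : X) : ∃ t ∈ A, t ≠ u ∧ t ≠ v ∧ t ≠ w := by
  by_contra hcon
  push_neg at hcon
  have hsub : (A : Set X) ⊆ {u, v, w} := by
    intro t ht
    simp only [Set.mem_insert_iff, Set.mem_singleton_iff]
    by_cases h1 : t = u
    · exact Or.inl h1
    by_cases h2 : t = v
    · exact Or.inr (Or.inl h2)
    · exact Or.inr (Or.inr (hcon t ht h1 h2))
  have h1 : Cardinal.mk A ≤ Cardinal.mk ({u, v, w} : Set X) :=
    Cardinal.mk_le_mk_of_subset hsub
  have h2 : Cardinal.mk ({u, v, w} : Set X) ≤ 3 := by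
    have i1 : Cardinal.mk ({u, v, w} : Set X) ≤ Cardinal.mk ({v, w} : Set X) + 1 :=
      Cardinal.mk_insert_le
    have i2 : Cardinal.mk ({v, w} : Set X) ≤ Cardinal.mk ({w} : Set X) + 1 :=
      Cardinal.mk_insert_le
    rw [Cardinal.mk_singleton] at i2
    calc Cardinal.mk ({u, v, w} : Set X) ≤ Cardinal.mk ({v, w} : Set X) + 1 := i1
      _ ≤ (1 + 1) + 1 := by exact add_le_add_left i2 1
      _ = 3 := by norm_num
  have h3 : (4 : Cardinal) ≤ 3 := hcard.trans (h1.trans h2)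
  norm_num at h3

end Rk1Aux



theorem stmt8
    {X : Type*} [Group X] (A B : Subgroup X) (hAB : A ≠ B)
    (hAcomm : IsMulCommutative A) (hBcomm : IsMulCommutative B)
    (hgen : A ⊔ B = ⊤)
    (hab : ∀ a ∈ A, a ≠ 1 → ∃ b ∈ B, b ≠ 1 ∧ conjSub A b = conjSub B a)
    (hba : ∀ b ∈ B, b ≠ 1 → ∃ a ∈ A, a ≠ 1 ∧ conjSub B a = conjSub A b)
    (bf : X → X)
    (hbf : ∀ a ∈ A, a ≠ 1 → bf a ∈ B ∧ bf a ≠ 1 ∧ conjSub A (bf a) = conjSub B a)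
    (hbfu : ∀ a ∈ A, a ≠ 1 → ∀ b ∈ B, b ≠ 1 → conjSub A b = conjSub B a → b = bf a)
    (hspecial : ∀ a ∈ A, a ≠ 1 → bf a⁻¹ = (bf a)⁻¹)
    (hcard : 4 ≤ Cardinal.mk A) :
    ⁅A, Subgroup.normalizer (A : Set X) ⊓ Subgroup.normalizer (B : Set X)⁆ = A := by
  classical
  let c : Rk1Aux.Ctx X := ⟨A, B, hAB, hAcomm, bf, hba, hbf, hbfu, hspecial⟩
  apply le_antisymm
  · rw [Subgroup.commutator_le]
    intro a ha h hh
    have hhA : h ∈ Subgroup.normalizer (A : Set X) := (Subgroup.mem_inf.mp hh).1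
    rw [Subgroup.mem_normalizer_iff] at hhA
    have h2 : h * a⁻¹ * h⁻¹ ∈ A := (hhA a⁻¹).mp (A.inv_mem ha)
    have e : ⁅a, h⁆ = a * (h * a⁻¹ * h⁻¹) := by rw [commutatorElement_def]; group
    rw [e]; exact A.mul_mem ha h2
  · intro x hx
    by_cases hx1 : x = 1
    · rw [hx1]; exact Subgroup.one_mem _
    have pairs : ∀ x₁ ∈ A, x₁ ≠ 1 → ∀ x₂ ∈ A, x₂ ≠ 1 → x₁ * x₂⁻¹ ∈ c.Mgrp := by
      intro x₁ h₁ h₁1 x₂ h₂ h₂1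
      obtain ⟨t, htA, ht1, ht2, ht3⟩ := Rk1Aux.pick hcard 1 x₁⁻¹ x₂⁻¹
      have k₁ : x₁ * t * t ∈ c.Mgrp := by
        refine c.crux h₁ h₁1 htA ht1 ?_
        intro h0; exact ht2 (eq_inv_of_mul_eq_one_right h0)
      have k₂ : x₂ * t * t ∈ c.Mgrp := by
        refine c.crux h₂ h₂1 htA ht1 ?_
        intro h0; exact ht3 (eq_inv_of_mul_eq_one_right h0)
      have e : x₁ * x₂⁻¹ = (x₁ * t * t) * (x₂ * t * t)⁻¹ := by group
      rw [e]; exact mul_mem k₁ (inv_mem k₂)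
    obtain ⟨a, haA, ha1, -, -⟩ := Rk1Aux.pick hcard 1 1 1
    obtain ⟨b, hbA, hb1, hb2, -⟩ := Rk1Aux.pick hcard 1 a⁻¹ a⁻¹
    have habne : a * b ≠ 1 := fun h0 => hb2 (eq_inv_of_mul_eq_one_right h0)
    have haM : a ∈ c.Mgrp := by
      have h9 := pairs (a * b) (A.mul_mem haA hbA) habne b hbA hb1
      rwa [(show (a * b) * b⁻¹ = a by group)] at h9
    have hxM : x ∈ c.Mgrp := by
      have h10 := pairs x hx hx1 a haA ha1
      rw [(show x = (x * a⁻¹) * a by group)]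
      exact mul_mem h10 haM
    exact hxM
end
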